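/- Let τ ∈ ℂ with Im τ > 0 and let θ: ℂ → ℂ satisfy θ(z+1) = -θ(z) and θ(z+τ) = -exp(-πi(2z+τ)) θ(z) for all z. Fix integers N ≥ 1, m₁, m₂ with m₂ ≠ 0 or m₁ ≠ 0, set η = (m₁ + m₂τ)/(2N), and define the renormalized theta function θ̃(z) = θ(z) exp(πi m₂ (z - 1/2)² / (2Nη)). Then θ̃(z + 2Nη) = (-1)^{m₁(m₂+1)} θ̃(z) for all z ∈ ℂ. -/

import Mathlib

/-- quasi-periodicity of the renormalized theta function
θ̃(z) = θ(z) exp(πi m₂ (z-1/2)²/(2Nη)) under z → z + 2Nη, where η = (m₁ + m₂τ)/(2N). -/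
theorem renormalized_theta_quasi_periodic (τ : ℂ) (hτ : 0 < τ.im) (θ : ℂ → ℂ)
    (h1 : ∀ z : ℂ, θ (z + 1) = -θ z)
    (h2 : ∀ z : ℂ, θ (z + τ) = -Complex.exp (-((Real.pi : ℂ) * Complex.I * (2 * z + τ))) * θ z)
    (N : ℕ) (hN : 1 ≤ N) (m₁ m₂ : ℤ) (hm : m₁ ≠ 0 ∨ m₂ ≠ 0)
    (η : ℂ) (hη : η = ((m₁ : ℂ) + (m₂ : ℂ) * τ) / (2 * N))
    (θt : ℂ → ℂ)
    (hθt : ∀ z : ℂ, θt z = θ z *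
      Complex.exp ((Real.pi : ℂ) * Complex.I * (m₂ : ℂ) * (z - 1 / 2) ^ 2 / (2 * (N : ℂ) * η))) :
    ∀ z : ℂ, θt (z + 2 * (N : ℂ) * η) = (-1 : ℂ) ^ (m₁ * (m₂ + 1)) * θt z := by
  have hne : (-1 : ℂ) ≠ 0 := by norm_num
  have hpow : ∀ k : ℤ, Complex.exp ((Real.pi : ℂ) * Complex.I * k) = (-1 : ℂ) ^ k := by
    intro k
    rw [show (Real.pi : ℂ) * Complex.I * k = k * ((Real.pi : ℂ) * Complex.I) by ring,
      Complex.exp_int_mul, Complex.exp_pi_mul_I]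
  -- Lemma A: shift by an integer
  have hA : ∀ m : ℤ, ∀ z : ℂ, θ (z + (m : ℂ)) = (-1 : ℂ) ^ m * θ z := by
    intro m
    induction m using Int.induction_on with
    | zero => intro z; simp
    | succ n ih =>
      intro z
      rw [show (z + (((n : ℤ) + 1 : ℤ) : ℂ)) = (z + (n : ℤ)) + 1 by push_cast; ring,
        h1, ih, zpow_add₀ hne]
      ring
    | pred n ih =>
      intro z
      have hu : θ (z + ((-(n : ℤ) - 1 : ℤ) : ℂ)) = -θ ((z + ((-(n : ℤ) - 1 : ℤ) : ℂ)) + 1) := by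
        rw [h1]; ring
      rw [hu, show (z + ((-(n : ℤ) - 1 : ℤ) : ℂ)) + 1 = z + ((-(n : ℤ) : ℤ) : ℂ) by
        push_cast; ring, ih,
        show (-(n : ℤ) - 1 : ℤ) = (-(n : ℤ)) + (-1) by ring, zpow_add₀ hne, zpow_neg_one]
      norm_num
  -- Lemma B: shift by an integer multiple of τ
  have hB : ∀ m : ℤ, ∀ z : ℂ, θ (z + (m : ℂ) * τ) =
      (-1 : ℂ) ^ m *
        Complex.exp (-((Real.pi : ℂ) * Complex.I * (2 * (m : ℂ) * z + (m : ℂ) ^ 2 * τ))) *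
        θ z := by
    intro m
    induction m using Int.induction_on with
    | zero => intro z; simp
    | succ n ih =>
      intro z
      rw [show (z + (((n : ℤ) + 1 : ℤ) : ℂ) * τ) = (z + ((n : ℤ) : ℂ) * τ) + τ by
        push_cast; ring, h2, ih, zpow_add₀ hne]
      have hE : Complex.exp (-((Real.pi : ℂ) * Complex.I * (2 * (z + ((n : ℤ) : ℂ) * τ) + τ))) *
          Complex.exp (-((Real.pi : ℂ) * Complex.I *
            (2 * ((n : ℤ) : ℂ) * z + ((n : ℤ) : ℂ) ^ 2 * τ))) =
          Complex.exp (-((Real.pi : ℂ) * Complex.I *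
            (2 * (((n : ℤ) + 1 : ℤ) : ℂ) * z + (((n : ℤ) + 1 : ℤ) : ℂ) ^ 2 * τ))) := by
        rw [← Complex.exp_add]; congr 1; push_cast; ring
      calc -Complex.exp (-((Real.pi : ℂ) * Complex.I * (2 * (z + ((n : ℤ) : ℂ) * τ) + τ))) *
            ((-1 : ℂ) ^ (n : ℤ) * Complex.exp (-((Real.pi : ℂ) * Complex.I *
              (2 * ((n : ℤ) : ℂ) * z + ((n : ℤ) : ℂ) ^ 2 * τ))) * θ z)
          = (-1 : ℂ) ^ (n : ℤ) * (-1) *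
            (Complex.exp (-((Real.pi : ℂ) * Complex.I * (2 * (z + ((n : ℤ) : ℂ) * τ) + τ))) *
             Complex.exp (-((Real.pi : ℂ) * Complex.I *
               (2 * ((n : ℤ) : ℂ) * z + ((n : ℤ) : ℂ) ^ 2 * τ)))) * θ z := by ring
        _ = (-1 : ℂ) ^ (n : ℤ) * (-1) ^ (1 : ℤ) *
            Complex.exp (-((Real.pi : ℂ) * Complex.I *
              (2 * (((n : ℤ) + 1 : ℤ) : ℂ) * z + (((n : ℤ) + 1 : ℤ) : ℂ) ^ 2 * τ))) * θ z := by
          rw [hE]; norm_num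
    | pred n ih =>
      intro z
      set u : ℂ := z + ((-(n : ℤ) - 1 : ℤ) : ℂ) * τ with hu
      have key := h2 u
      rw [show u + τ = z + ((-(n : ℤ) : ℤ) : ℂ) * τ by rw [hu]; push_cast; ring, ih] at key
      have hE : Complex.exp (-((Real.pi : ℂ) * Complex.I * (2 * u + τ))) *
          Complex.exp (-((Real.pi : ℂ) * Complex.I *
            (2 * ((-(n : ℤ) - 1 : ℤ) : ℂ) * z + ((-(n : ℤ) - 1 : ℤ) : ℂ) ^ 2 * τ))) =
          Complex.exp (-((Real.pi : ℂ) * Complex.I *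
            (2 * ((-(n : ℤ) : ℤ) : ℂ) * z + ((-(n : ℤ) : ℤ) : ℂ) ^ 2 * τ))) := by
        rw [← Complex.exp_add]; congr 1; rw [hu]; push_cast; ring
      have hP : (-1 : ℂ) ^ (-(n : ℤ) - 1 : ℤ) = -(-1 : ℂ) ^ (-(n : ℤ)) := by
        rw [zpow_sub₀ hne, zpow_one, div_neg, div_one]
      have hA0 := Complex.exp_ne_zero (-((Real.pi : ℂ) * Complex.I * (2 * u + τ)))
      apply mul_left_cancel₀ hA0
      rw [hP]
      linear_combination key + ((-1 : ℂ) ^ (-(n : ℤ)) * θ z) * hE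
  -- set up w = m₁ + m₂ τ
  set w : ℂ := (m₁ : ℂ) + (m₂ : ℂ) * τ with hwdef
  have h2N : (2 * (N : ℂ)) ≠ 0 := by
    have : (N : ℂ) ≠ 0 := by exact Nat.cast_ne_zero.mpr (by omega)
    simpa using this
  have hw2N : 2 * (N : ℂ) * η = w := by
    rw [hη]; field_simp; exact mul_div_cancel_left₀ w (by exact_mod_cast (show N ≠ 0 by omega))
  have hw : w ≠ 0 := by
    rcases eq_or_ne m₂ 0 with h | h
    · subst h
      have hm₁ : m₁ ≠ 0 := by tauto
      simp only [hwdef, Int.cast_zero, zero_mul, add_zero]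
      exact_mod_cast hm₁
    · intro h0
      have him := congrArg Complex.im h0
      simp [hwdef, Complex.add_im, Complex.mul_im] at him
      rcases him with him | him
      · exact h (by exact_mod_cast him)
      · exact absurd him (ne_of_gt hτ)
  intro z
  rw [hθt, hθt, hw2N]
  rw [show z + w = (z + (m₂ : ℂ) * τ) + (m₁ : ℂ) by ring, hA, hB]
  have hE : Complex.exp (-((Real.pi : ℂ) * Complex.I *
        (2 * (m₂ : ℂ) * z + (m₂ : ℂ) ^ 2 * τ))) *
      Complex.exp ((Real.pi : ℂ) * Complex.I * (m₂ : ℂ) * (z + (m₂ : ℂ) * τ + (m₁ : ℂ) - 1 / 2) ^ 2 / w) =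
      Complex.exp ((Real.pi : ℂ) * Complex.I * ((m₂ * (m₁ - 1) : ℤ) : ℂ)) *
      Complex.exp ((Real.pi : ℂ) * Complex.I * (m₂ : ℂ) * (z - 1 / 2) ^ 2 / w) := by
    rw [← Complex.exp_add, ← Complex.exp_add]
    congr 1
    field_simp
    rw [hwdef]
    push_cast
    ring
  have hfin : (-1 : ℂ) ^ m₁ * (-1 : ℂ) ^ m₂ * (-1 : ℂ) ^ (m₂ * (m₁ - 1)) =
      (-1 : ℂ) ^ (m₁ * (m₂ + 1)) := by
    rw [← zpow_add₀ hne, ← zpow_add₀ hne]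
    congr 1
    ring
  calc (-1 : ℂ) ^ m₁ * ((-1 : ℂ) ^ m₂ *
        Complex.exp (-((Real.pi : ℂ) * Complex.I *
          (2 * (m₂ : ℂ) * z + (m₂ : ℂ) ^ 2 * τ))) * θ z) *
        Complex.exp ((Real.pi : ℂ) * Complex.I * (m₂ : ℂ) * (z + (m₂ : ℂ) * τ + (m₁ : ℂ) - 1 / 2) ^ 2 / w)
      = (-1 : ℂ) ^ m₁ * (-1 : ℂ) ^ m₂ *
        (Complex.exp (-((Real.pi : ℂ) * Complex.I *
          (2 * (m₂ : ℂ) * z + (m₂ : ℂ) ^ 2 * τ))) *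
         Complex.exp ((Real.pi : ℂ) * Complex.I * (m₂ : ℂ) * (z + (m₂ : ℂ) * τ + (m₁ : ℂ) - 1 / 2) ^ 2 / w)) *
        θ z := by ring
    _ = (-1 : ℂ) ^ m₁ * (-1 : ℂ) ^ m₂ *
        (Complex.exp ((Real.pi : ℂ) * Complex.I * ((m₂ * (m₁ - 1) : ℤ) : ℂ)) *
         Complex.exp ((Real.pi : ℂ) * Complex.I * (m₂ : ℂ) * (z - 1 / 2) ^ 2 / w)) *
        θ z := by rw [hE]
    _ = (-1 : ℂ) ^ (m₁ * (m₂ + 1)) *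
        (θ z * Complex.exp ((Real.pi : ℂ) * Complex.I * (m₂ : ℂ) * (z - 1 / 2) ^ 2 / w)) := by
        rw [hpow, ← hfin]; ring
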